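/- Let T(n) denote the minimum number of queries needed to solve black-peg Mastermind with n colors and n positions, and suppose T(n) = O(n). Then for any √n ≤ k ≤ n, black-peg Mastermind with k colors and n positions can be solved in O(n) queries: first find z ∈ [k]^n with b_c(z) = 0 in n+1 queries, then simulate the n-color strategy by replacing any color > k in a query by the corresponding entry of z; the simulated answers are correct since c ∈ [k]^n. -/

import Mathlib

/-- Black-peg count. -/
def blackPegs {n k : ℕ} (c q : Fin n → Fin k) : ℕ :=
  (Finset.univ.filter fun i => q i = c i).card

/-- The answer transcript of an adaptive strategy played against codeword `c` after `t`
queries. -/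
def transcript {n k : ℕ} (strat : List ℕ → (Fin n → Fin k)) (c : Fin n → Fin k) :
    ℕ → List ℕ
  | 0 => []
  | t + 1 =>
    transcript strat c t ++ [blackPegs c (strat (transcript strat c t))]

namespace MMaux

lemma transcript_length {n k : ℕ} (strat : List ℕ → (Fin n → Fin k)) (c : Fin n → Fin k) :
    ∀ t, (transcript strat c t).length = t
  | 0 => rfl
  | t + 1 => by simp [transcript, transcript_length strat c t]

lemma transcript_getD {n k : ℕ} (strat : List ℕ → (Fin n → Fin k)) (c : Fin n → Fin k)
    {s t : ℕ} (h : s < t) :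
    (transcript strat c t).getD s 0 = blackPegs c (strat (transcript strat c s)) := by
  induction t with
  | zero => omega
  | succ t ih =>
    rcases Nat.lt_succ_iff_lt_or_eq.mp h with h' | h'
    · rw [transcript, List.getD_append _ _ _ _ (by rw [transcript_length]; exact h')]
      exact ih h'
    · subst h'
      rw [transcript, List.getD_append_right _ _ _ _ (by rw [transcript_length])]
      simp [transcript_length]

/-- Phase-1 query number `s`. -/
def p1q (n k : ℕ) (hk : 2 ≤ k) (s : ℕ) : Fin n → Fin k :=
  fun i => if (i : ℕ) + 1 = s then ⟨1, by omega⟩ else ⟨0, by omega⟩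

/-- Decoded "avoiding" word from a phase-1 history. -/
def zOf (n k : ℕ) (hk : 2 ≤ k) (h : List ℕ) : Fin n → Fin k :=
  fun i => if h.getD ((i : ℕ) + 1) 0 < h.getD 0 0 then ⟨1, by omega⟩ else ⟨0, by omega⟩

/-- The combined strategy. -/
def comb (n k : ℕ) (hk : 2 ≤ k) (strat0 : List ℕ → (Fin n → Fin n)) (h : List ℕ) :
    Fin n → Fin k :=
  if h.length < n + 1 then p1q n k hk h.length
  else fun i =>
    if hq : ((strat0 (h.drop (n + 1)) i : ℕ) < k) then ⟨strat0 (h.drop (n + 1)) i, hq⟩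
    else zOf n k hk (h.take (n + 1)) i

lemma p1q_peg_lt {n k : ℕ} (hk : 2 ≤ k) (c : Fin n → Fin k) (j : Fin n) :
    blackPegs c (p1q n k hk ((j : ℕ) + 1)) < blackPegs c (p1q n k hk 0) ↔
      c j = ⟨0, by omega⟩ := by
  classical
  unfold blackPegs p1q
  set A : Finset (Fin n) := Finset.univ.filter fun i => (⟨0, by omega⟩ : Fin k) = c i with hA
  have hA' : (Finset.univ.filter fun i : Fin n =>
      (if i.val + 1 = 0 then (⟨1, by omega⟩ : Fin k) else ⟨0, by omega⟩) = c i) = A := by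
    apply Finset.filter_congr; intro i _; simp
  rw [hA']
  set B : Finset (Fin n) := Finset.univ.filter fun i : Fin n =>
      (if i.val + 1 = j.val + 1 then (⟨1, by omega⟩ : Fin k) else ⟨0, by omega⟩) = c i
    with hB
  have hij : ∀ i : Fin n, ((i : ℕ) + 1 = (j : ℕ) + 1) ↔ i = j := by
    intro i; constructor
    · intro h; exact Fin.ext (by omega)
    · intro h; subst h; rfl
  by_cases h0 : c j = ⟨0, by omega⟩
  · have hjA : j ∈ A := by simp [hA, h0]
    have hBA : B = A.erase j := by
      ext i
      by_cases hi : i = j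
      · subst hi
        simp [hB, hij, h0, Fin.ext_iff]
      · simp [hB, hA, hij, hi, Finset.mem_erase, Fin.val_inj]
    rw [hBA, Finset.card_erase_of_mem hjA]
    have : 0 < A.card := Finset.card_pos.mpr ⟨j, hjA⟩
    exact iff_of_true (by omega) h0
  · simp only [h0, iff_false, not_lt]
    by_cases h1 : c j = ⟨1, by omega⟩
    · have hjA : j ∉ A := by simp [hA]; intro h; rw [← h] at h1; simp [Fin.ext_iff] at h1
      have hBA : B = insert j A := by
        ext i
        by_cases hi : i = j
        · subst hi; simp [hB, hij, h1]
        · simp [hB, hA, hij, hi, Fin.val_inj]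
      rw [hBA, Finset.card_insert_of_notMem hjA]
      omega
    · have hBA : B = A := by
        ext i
        by_cases hi : i = j
        · subst hi
          simp [hB, hA, hij]
          constructor
          · intro h; exact absurd h.symm h1
          · intro h; exact absurd h.symm h0
        · simp [hB, hA, hij, hi, Fin.val_inj]
      rw [hBA]

lemma comb_phase1 {n k : ℕ} (hk : 2 ≤ k) (strat0 : List ℕ → (Fin n → Fin n))
    (h : List ℕ) (hl : h.length < n + 1) : comb n k hk strat0 h = p1q n k hk h.length := by
  simp [comb, hl]

lemma zOf_transcript_ne {n k : ℕ} (hk : 2 ≤ k) (strat0 : List ℕ → (Fin n → Fin n))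
    (c : Fin n → Fin k) (j : Fin n) :
    zOf n k hk (transcript (comb n k hk strat0) c (n + 1)) j ≠ c j := by
  have key : ∀ s < n + 1,
      (transcript (comb n k hk strat0) c (n + 1)).getD s 0 = blackPegs c (p1q n k hk s) := by
    intro s hs
    rw [transcript_getD _ _ hs,
      comb_phase1 hk strat0 _ (by rw [transcript_length]; exact hs), transcript_length]
  unfold zOf
  rw [key ((j : ℕ) + 1) (by omega), key 0 (by omega)]
  by_cases h0 : c j = ⟨0, by omega⟩
  · rw [if_pos ((p1q_peg_lt hk c j).mpr h0)]
    simp [h0, Fin.ext_iff]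
  · rw [if_neg (fun h => h0 ((p1q_peg_lt hk c j).mp h))]
    intro h; exact h0 h.symm

lemma blackPegs_sim {n k : ℕ} (hkn : k ≤ n) (c z : Fin n → Fin k) (hz : ∀ i, z i ≠ c i)
    (Q : Fin n → Fin n) :
    blackPegs c (fun i => if hq : ((Q i : ℕ) < k) then ⟨Q i, hq⟩ else z i)
      = blackPegs (Fin.castLE hkn ∘ c) Q := by
  unfold blackPegs
  congr 1
  apply Finset.filter_congr
  intro i _
  by_cases hq : (Q i : ℕ) < k
  · simp [hq, Fin.ext_iff]
  · simp only [hq, dif_neg, not_false_iff]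
    constructor
    · intro h; exact absurd h (hz i)
    · intro h
      exfalso
      apply hq
      rw [h]
      exact (c i).2

lemma comb_transcript {n k : ℕ} (hk : 2 ≤ k) (hkn : k ≤ n)
    (strat0 : List ℕ → (Fin n → Fin n)) (c : Fin n → Fin k) :
    ∀ t, transcript (comb n k hk strat0) c (n + 1 + t) =
      transcript (comb n k hk strat0) c (n + 1) ++ transcript strat0 (Fin.castLE hkn ∘ c) t := by
  intro t
  induction t with
  | zero => simp [transcript]
  | succ t ih =>
    have : n + 1 + (t + 1) = (n + 1 + t) + 1 := by omega
    rw [this]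
    show transcript (comb n k hk strat0) c (n + 1 + t) ++ _ = _
    rw [ih]
    have hlen : (transcript (comb n k hk strat0) c (n + 1) ++
        transcript strat0 (Fin.castLE hkn ∘ c) t).length = n + 1 + t := by
      simp [transcript_length]
    have hcomb : comb n k hk strat0 (transcript (comb n k hk strat0) c (n + 1) ++
        transcript strat0 (Fin.castLE hkn ∘ c) t) = fun i =>
        if hq : ((strat0 (transcript strat0 (Fin.castLE hkn ∘ c) t) i : ℕ) < k) then
          ⟨strat0 (transcript strat0 (Fin.castLE hkn ∘ c) t) i, hq⟩
        else zOf n k hk (transcript (comb n k hk strat0) c (n + 1)) i := by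
      rw [comb, if_neg (by rw [hlen]; omega)]
      have hdrop : (transcript (comb n k hk strat0) c (n + 1) ++
          transcript strat0 (Fin.castLE hkn ∘ c) t).drop (n + 1) =
          transcript strat0 (Fin.castLE hkn ∘ c) t := by
        rw [List.drop_append_of_le_length (by rw [transcript_length])]
        simp [transcript_length]
      have htake : (transcript (comb n k hk strat0) c (n + 1) ++
          transcript strat0 (Fin.castLE hkn ∘ c) t).take (n + 1) =
          transcript (comb n k hk strat0) c (n + 1) := by
        rw [List.take_append_of_le_length (by rw [transcript_length])]
        simp [transcript_length]
      rw [hdrop, htake]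
    rw [hcomb, blackPegs_sim hkn c _ (fun i => zOf_transcript_ne hk strat0 c i)
      (strat0 (transcript strat0 (Fin.castLE hkn ∘ c) t))]
    rw [List.append_assoc]
    rfl

end MMaux

/-- If black-peg Mastermind with `n` colors and `n` positions is solvable in
`O(n)` queries, then for any `√n ≤ k ≤ n`, black-peg Mastermind with `k` colors and `n`
positions is solvable in `O(n)` queries. -/
theorem intermediate_colors_linear (C : ℕ)
    (hsolve : ∀ n : ℕ, 1 ≤ n → ∃ strat : List ℕ → (Fin n → Fin n), ∃ T : ℕ,
      T ≤ C * n ∧ Function.Injective fun c : Fin n → Fin n => transcript strat c T) :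
    ∃ C' : ℕ, ∀ n k : ℕ, 1 ≤ k → Real.sqrt n ≤ k → k ≤ n →
      ∃ strat : List ℕ → (Fin n → Fin k), ∃ T : ℕ,
        T ≤ C' * n ∧ Function.Injective fun c : Fin n → Fin k => transcript strat c T := by
  classical
  refine ⟨C + 2, fun n k hk1 _ hkn => ?_⟩
  by_cases hk2 : 2 ≤ k
  swap
  · -- k = 1 : the codeword space is a subsingleton
    have hk : k = 1 := by omega
    subst hk
    refine ⟨fun _ => fun _ => ⟨0, by omega⟩, 0, by omega, fun c d _ => ?_⟩
    funext i
    exact Subsingleton.elim _ _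
  · have hn1 : 1 ≤ n := by omega
    obtain ⟨strat0, T0, hT0, hinj0⟩ := hsolve n hn1
    refine ⟨MMaux.comb n k hk2 strat0, n + 1 + T0, by nlinarith, ?_⟩
    intro c d hcd
    simp only at hcd
    rw [MMaux.comb_transcript hk2 hkn strat0 c T0,
      MMaux.comb_transcript hk2 hkn strat0 d T0] at hcd
    have hlen : (transcript (MMaux.comb n k hk2 strat0) c (n + 1)).length =
        (transcript (MMaux.comb n k hk2 strat0) d (n + 1)).length := by
      simp [MMaux.transcript_length]
    obtain ⟨_, h2⟩ := List.append_inj hcd hlen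
    have := hinj0 h2
    funext i
    have : Fin.castLE hkn (c i) = Fin.castLE hkn (d i) := congrFun this i
    exact Fin.castLE_injective hkn this
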